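/- Let n ≥ 2 and let ζ be a primitive n-th root of unity in a field k of characteristic zero. In the Taft algebra H_n generated by K, K⁻¹, d with K^n = 1, Kd = ζdK, d^n = 0, the element Λ = (1/n)(Σ_{i=0}^{n-1} K^i)d^{n-1} is a left integral: hΛ = ε(h)Λ for all h ∈ H_n, where ε(K) = 1 and ε(d) = 0. -/

import Mathlib

open TensorProduct

noncomputable section

namespace Hopfological

variable (k : Type*) [Field k]

/-- The scalar action of a `k`-algebra `R` on a module `M`, as a `k`-bilinear map. -/
def actL (R M : Type*) [Ring R] [Algebra k R] [AddCommGroup M] [Module k M]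
    [Module R M] [IsScalarTower k R M] [SMulCommClass k R M] :
    R →ₗ[k] M →ₗ[k] M :=
  LinearMap.mk₂ k (· • ·) (fun r r' m => add_smul r r' m) (fun c r m => smul_assoc c r m)
    (fun r m m' => smul_add r m m') (fun c r m => (smul_comm c r m).symm)

@[simp] lemma actL_apply (R M : Type*) [Ring R] [Algebra k R] [AddCommGroup M] [Module k M]
    [Module R M] [IsScalarTower k R M] [SMulCommClass k R M] (r : R) (m : M) :
    actL k R M r m = r • m := rfl

variable (H : Type*) [Ring H] [HopfAlgebra k H]

/-- The diagonal (Sweedler) action of `H` on a tensor product, built from two given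
`k`-linear actions `ρM`, `ρN`:  `h • (m ⊗ n) = ∑ ρM h₁ m ⊗ ρN h₂ n`. -/
def tenActVia {M N : Type*} [AddCommGroup M] [Module k M] [AddCommGroup N] [Module k N]
    (ρM : H →ₗ[k] M →ₗ[k] M) (ρN : H →ₗ[k] N →ₗ[k] N) :
    H →ₗ[k] (M ⊗[k] N) →ₗ[k] (M ⊗[k] N) :=
  (TensorProduct.lift (((TensorProduct.mapBilinear (RingHom.id k) M N M N).comp ρM).compl₂ ρN)).comp
    (Coalgebra.comul (R := k))

/-- The conjugation (Sweedler) action of `H` on `k`-linear maps: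
`(h • f) m = ∑ ρN h₂ (f (ρM (S⁻¹ h₁) m))`. -/
def conjAct (Sinv : H →ₗ[k] H) {M N : Type*} [AddCommGroup M] [Module k M]
    [AddCommGroup N] [Module k N]
    (ρM : H →ₗ[k] M →ₗ[k] M) (ρN : H →ₗ[k] N →ₗ[k] N) :
    H →ₗ[k] (M →ₗ[k] N) →ₗ[k] (M →ₗ[k] N) :=
  (TensorProduct.lift (LinearMap.mk₂ k
      (fun h₁ h₂ => (LinearMap.llcomp k M N N (ρN h₂)).comp
        (LinearMap.lcomp k N (ρM (Sinv h₁))))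
      (fun h₁ h₁' h₂ => by ext f m; simp)
      (fun c h₁ h₂ => by ext f m; simp)
      (fun h₁ h₂ h₂' => by ext f m; simp)
      (fun c h₁ h₂ => by ext f m; simp))).comp (Coalgebra.comul (R := k))

/-- `A` is a left `H`-module algebra with respect to the action `ρ`. -/
def IsModuleAlgebraVia (A : Type*) [Ring A] [Algebra k A]
    (ρ : H →ₗ[k] A →ₗ[k] A) : Prop :=
  (∀ (h h' : H) (a : A), ρ (h * h') a = ρ h (ρ h' a)) ∧
  (∀ a : A, ρ 1 a = a) ∧
  (∀ (h : H) (a b : A),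
    ρ h (a * b) = LinearMap.mul' k A (tenActVia k H ρ ρ h (a ⊗ₜ[k] b))) ∧
  (∀ h : H, ρ h 1 = Coalgebra.counit (R := k) h • (1 : A))

/-- `M` is a module over the smash product `A#H`: the `H`- and `A`-actions satisfy
`h • (a • m) = ∑ (h₁ • a) • (h₂ • m)`. -/
def IsSmashModule (A M : Type*) [Ring A] [Algebra k A] [AddCommGroup M] [Module k M]
    [Module A M] [IsScalarTower k A M] [SMulCommClass k A M]
    [Module H A] [IsScalarTower k H A] [SMulCommClass k H A]
    [Module H M] [IsScalarTower k H M] [SMulCommClass k H M] : Prop :=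
  ∀ (h : H) (a : A) (m : M),
    h • (a • m) =
      TensorProduct.lift
        (LinearMap.mk₂ k (· • ·) (fun a a' m => add_smul a a' m)
          (fun c a m => smul_assoc c a m) (fun a m m' => smul_add a m m')
          (fun c a m => (smul_comm c a m).symm))
        (tenActVia k H (actL k H A) (actL k H M) h (a ⊗ₜ[k] m))


/-- In the Taft algebra `H_n` over a field of characteristic zero with a
primitive `n`-th root of unity `ζ` (generated by `K, K⁻¹, d` with `K^n = 1`, `Kd = ζdK`,
`d^n = 0`, `Δ(K) = K ⊗ K`, `Δ(d) = d ⊗ 1 + K ⊗ d`, `ε(K) = 1`, `ε(d) = 0`), the element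
`Λ = (1/n)(∑_{i=0}^{n-1} K^i) d^{n-1}` is a left integral: `hΛ = ε(h)Λ` for all `h`. -/
theorem taft_left_integral [CharZero k]
    (n : ℕ) (hn : 2 ≤ n) (ζ : k) (hζ : IsPrimitiveRoot ζ n)
    (K d : H)
    (hK : K ^ n = 1)
    (hKd : K * d = ζ • (d * K))
    (hd : d ^ n = 0)
    (hcomulK : Coalgebra.comul (R := k) K = K ⊗ₜ[k] K)
    (hcomuld : Coalgebra.comul (R := k) d = d ⊗ₜ[k] 1 + K ⊗ₜ[k] d)
    (hcounitK : Coalgebra.counit (R := k) K = 1)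
    (hcounitd : Coalgebra.counit (R := k) d = 0)
    (hgen : Algebra.adjoin k ({K, d} : Set H) = ⊤) :
    ∀ h : H,
      h * ((n : k)⁻¹ • ((∑ i ∈ Finset.range n, K ^ i) * d ^ (n - 1)))
        = Coalgebra.counit (R := k) h •
            ((n : k)⁻¹ • ((∑ i ∈ Finset.range n, K ^ i) * d ^ (n - 1))) := by
  set Λ : H := (n : k)⁻¹ • ((∑ i ∈ Finset.range n, K ^ i) * d ^ (n - 1)) with hΛdef
  have hn0 : n ≠ 0 := by omega
  have hζ0 : ζ ≠ 0 := hζ.ne_zero hn0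
  -- K acts trivially on Λ
  have hshift : ∑ i ∈ Finset.range n, K ^ (i + 1) = ∑ i ∈ Finset.range n, K ^ i := by
    have h1 : ∑ i ∈ Finset.range (n + 1), K ^ i
        = (∑ i ∈ Finset.range n, K ^ (i + 1)) + K ^ 0 := Finset.sum_range_succ' _ n
    have h2 : ∑ i ∈ Finset.range (n + 1), K ^ i
        = (∑ i ∈ Finset.range n, K ^ i) + K ^ n := Finset.sum_range_succ _ n
    rw [h1, hK] at h2
    simpa using h2
  have hKΛ : K * Λ = Λ := by
    rw [hΛdef, mul_smul_comm, ← mul_assoc, Finset.mul_sum]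
    congr 2
    calc ∑ i ∈ Finset.range n, K * K ^ i
        = ∑ i ∈ Finset.range n, K ^ (i + 1) := by
          exact Finset.sum_congr rfl fun i _ => (pow_succ' K i).symm
      _ = ∑ i ∈ Finset.range n, K ^ i := hshift
  -- d kills Λ
  have hdK : d * K = ζ⁻¹ • (K * d) := by
    rw [hKd, smul_smul, inv_mul_cancel₀ hζ0, one_smul]
  have hdKi : ∀ i : ℕ, d * K ^ i = (ζ⁻¹) ^ i • (K ^ i * d) := by
    intro i
    induction i with
    | zero => simp
    | succ i ih =>
      rw [pow_succ, ← mul_assoc, ih, smul_mul_assoc, mul_assoc, hdK, mul_smul_comm,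
        smul_smul, ← pow_succ, ← mul_assoc, pow_succ]
  have hddn : d * d ^ (n - 1) = 0 := by
    have : d * d ^ (n - 1) = d ^ n := by
      rw [← pow_succ', Nat.sub_add_cancel (by omega)]
    rw [this, hd]
  have hdΛ : d * Λ = 0 := by
    rw [hΛdef, mul_smul_comm, ← mul_assoc, Finset.mul_sum, Finset.sum_mul]
    have : ∀ i ∈ Finset.range n, d * K ^ i * d ^ (n - 1) = 0 := by
      intro i _
      rw [hdKi, smul_mul_assoc, mul_assoc, hddn, mul_zero, smul_zero]
    rw [Finset.sum_congr rfl this, Finset.sum_const_zero, smul_zero]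
  -- conclude by induction on the generators
  intro h
  have hmem : h ∈ Algebra.adjoin k ({K, d} : Set H) := hgen ▸ Algebra.mem_top
  induction hmem using Algebra.adjoin_induction with
  | mem x hx =>
    rcases hx with rfl | hx
    · rw [hKΛ, hcounitK, one_smul]
    · rw [Set.mem_singleton_iff] at hx
      subst hx
      rw [hdΛ, hcounitd, zero_smul]
  | algebraMap r =>
    rw [Bialgebra.counit_algebraMap, Algebra.smul_def]
  | add x y hx hy ihx ihy =>
    rw [add_mul, ihx, ihy, map_add, add_smul]
  | mul x y hx hy ihx ihy =>
    rw [mul_assoc, ihy, mul_smul_comm, ihx, Bialgebra.counit_mul, mul_comm, mul_smul]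

end Hopfological
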